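/- arXiv:1901.04032 — 5 statements merged into one kernel-verified Lean document; each statement's English description precedes it below -/
import Mathlib

section
/- For every nonnegative integer m, the pair (a,b) = (2m+1, 1) is the minimal positive integer solution of the equation a^2 - 4eb^2 = -11 with e = m^2 + m + 3 (minimal meaning that any positive solution (a',b') satisfies a' + 2b'√e ≥ a + 2b√e). -/
/-- For every nonnegative integer `m`, the pair `(a, b) = (2m+1, 1)` is the minimal positive
integer solution of `a² - 4eb² = -11` with `e = m² + m + 3`: it is a solution, and any positive
solution `(a', b')` satisfies `a' + 2b'√e ≥ a + 2b√e`. -/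
theorem minimal_solution_of_pell_like (m : ℕ) :
    ((2 * (m : ℤ) + 1) ^ 2 - 4 * ((m : ℤ) ^ 2 + m + 3) * 1 ^ 2 = -11) ∧
    ∀ a' b' : ℤ, 0 < a' → 0 < b' →
      a' ^ 2 - 4 * ((m : ℤ) ^ 2 + m + 3) * b' ^ 2 = -11 →
      (2 * (m : ℝ) + 1) + 2 * 1 * Real.sqrt ((m : ℝ) ^ 2 + m + 3) ≤
        (a' : ℝ) + 2 * (b' : ℝ) * Real.sqrt ((m : ℝ) ^ 2 + m + 3) := by
  constructor
  · ring
  · intro a' b' ha hb heq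
    set e : ℝ := (m : ℝ) ^ 2 + m + 3 with he
    have he0 : (0:ℝ) ≤ e := by positivity
    have hsq : ((2 * (m:ℝ) + 1) / 2) ≤ Real.sqrt e := by
      have hes : Real.sqrt e ^ 2 = e := Real.sq_sqrt he0
      nlinarith [Real.sqrt_nonneg e, hes]
    rcases eq_or_lt_of_le (show (1:ℤ) ≤ b' by omega) with hb1 | hb2
    · -- b' = 1
      have hb1' : b' = 1 := hb1.symm
      subst hb1'
      have : a' ^ 2 = (2 * (m:ℤ) + 1) ^ 2 := by linarith
      have ha' : a' = 2 * (m:ℤ) + 1 := by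
        nlinarith [sq_nonneg (a' - (2 * (m:ℤ) + 1)), sq_nonneg (a' + (2 * (m:ℤ) + 1))]
      subst ha'
      push_cast
      ring_nf
      rfl
    · -- b' ≥ 2
      have hb2' : (2:ℝ) ≤ (b' : ℝ) := by exact_mod_cast hb2
      have ha1 : (1:ℝ) ≤ (a' : ℝ) := by exact_mod_cast ha
      nlinarith [hsq, Real.sqrt_nonneg e]
end

section
/- Let e be a positive integer that is not a perfect square, let a1, b1 be positive integers with a1^2 - e*b1^2 = 1, and let a2, b2 be positive integers with a2^2 - 4e*b2^2 = -11. Then the pair (a,b) = (2e*b1*b2 - a1*a2, a1*b2 - (1/2)*a2*b1) (when b1 is even so that b is an integer) satisfies a/(2b) ≤ e*b1/a1; that is, the class corresponding to this solution is movable. Equivalently, a1*(2e*b1*b2 - a1*a2) ≤ e*b1*(2a1*b2 - a2*b1). -/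
/-- Let `e` be a positive nonsquare integer, `a₁, b₁ > 0` with `a₁² - eb₁² = 1` and `b₁` even,
and `a₂, b₂ > 0` with `a₂² - 4eb₂² = -11`. Then the class corresponding to the solution
`(2eb₁b₂ - a₁a₂, a₁b₂ - a₂b₁/2)` is movable: `a₁(2eb₁b₂ - a₁a₂) ≤ eb₁(2a₁b₂ - a₂b₁)`. -/
theorem movable_class_inequality (e a1 b1 a2 b2 : ℤ) (he : 0 < e) (hns : ¬ IsSquare e)
    (ha1 : 0 < a1) (hb1 : 0 < b1) (hpell : a1 ^ 2 - e * b1 ^ 2 = 1)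
    (hb1even : Even b1)
    (ha2 : 0 < a2) (hb2 : 0 < b2) (h11 : a2 ^ 2 - 4 * e * b2 ^ 2 = -11) :
    a1 * (2 * e * b1 * b2 - a1 * a2) ≤ e * b1 * (2 * a1 * b2 - a2 * b1) := by
  nlinarith [mul_pos ha2 (by linarith : (0:ℤ) < 1)]
end

section
/- Let W be a 3-dimensional complex vector space with a fixed generator η of Λ³W, defining det(x,y,z) by x∧y∧z = det(x,y,z)·η. There exists a unique alternating trilinear form σ₀ on Sym³W such that σ₀(x³, y³, z³) = det(x,y,z)³ for all x, y, z in W. -/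
open MvPolynomial

/-- `Sym³W` for `W` a 3-dimensional complex vector space, modeled as the space of
homogeneous cubic polynomials in three variables. -/
noncomputable def Sym3W : Submodule ℂ (MvPolynomial (Fin 3) ℂ) :=
  homogeneousSubmodule (Fin 3) ℂ 3

/-- The cube `w³ ∈ Sym³W` of a vector `w ∈ W`. -/
noncomputable def cubePoly (w : Fin 3 → ℂ) : MvPolynomial (Fin 3) ℂ :=
  (∑ i, C (w i) * X i) ^ 3

lemma cubePoly_mem (w : Fin 3 → ℂ) : cubePoly w ∈ Sym3W := by
  have h1 : (∑ i, C (w i) * X i : MvPolynomial (Fin 3) ℂ).IsHomogeneous 1 := by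
    apply IsHomogeneous.sum
    intro i _
    simpa using (isHomogeneous_X ℂ i).C_mul (w i)
  simpa [Sym3W, mem_homogeneousSubmodule, cubePoly] using h1.pow 3

/-- The cube map `W → Sym³W`. -/
noncomputable def cube (w : Fin 3 → ℂ) : Sym3W := ⟨cubePoly w, cubePoly_mem w⟩

namespace Aux

noncomputable def d (a b c : ℕ) : Fin 3 →₀ ℕ :=
  Finsupp.single 0 a + Finsupp.single 1 b + Finsupp.single 2 c

@[simp] lemma d_apply0 (a b c : ℕ) : d a b c 0 = a := by
  simp [d, Finsupp.single_apply]
@[simp] lemma d_apply1 (a b c : ℕ) : d a b c 1 = b := by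
  simp [d, Finsupp.single_apply]
@[simp] lemma d_apply2 (a b c : ℕ) : d a b c 2 = c := by
  simp [d, Finsupp.single_apply]

@[simp] lemma d_eq_iff (a b c a' b' c' : ℕ) :
    d a b c = d a' b' c' ↔ a = a' ∧ b = b' ∧ c = c' := by
  constructor
  · intro h
    exact ⟨by rw [← d_apply0 a b c, h, d_apply0], by rw [← d_apply1 a b c, h, d_apply1],
      by rw [← d_apply2 a b c, h, d_apply2]⟩
  · rintro ⟨rfl, rfl, rfl⟩; rfl

lemma monomial_d (a b c : ℕ) (k : ℂ) :
    (monomial (d a b c) k : MvPolynomial (Fin 3) ℂ) = C k * X 0 ^ a * X 1 ^ b * X 2 ^ c := by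
  rw [d, X_pow_eq_monomial, X_pow_eq_monomial, X_pow_eq_monomial,
    mul_assoc, mul_assoc, monomial_mul, monomial_mul, C_mul_monomial]
  ring_nf
  rw [add_assoc]

lemma d_eval (v : Fin 3 →₀ ℕ) : v = d (v 0) (v 1) (v 2) := by
  ext i
  fin_cases i <;> simp

lemma cube_expand (w : Fin 3 → ℂ) : cubePoly w =
    monomial (d 0 0 3) (w 2 ^ 3) +
    monomial (d 0 1 2) (3 * w 1 * w 2 ^ 2) +
    monomial (d 0 2 1) (3 * w 1 ^ 2 * w 2) +
    monomial (d 0 3 0) (w 1 ^ 3) +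
    monomial (d 1 0 2) (3 * w 0 * w 2 ^ 2) +
    monomial (d 1 1 1) (6 * w 0 * w 1 * w 2) +
    monomial (d 1 2 0) (3 * w 0 * w 1 ^ 2) +
    monomial (d 2 0 1) (3 * w 0 ^ 2 * w 2) +
    monomial (d 2 1 0) (3 * w 0 ^ 2 * w 1) +
    monomial (d 3 0 0) (w 0 ^ 3) := by
  simp only [monomial_d, cubePoly, Fin.sum_univ_three, map_mul, map_pow, map_ofNat]
  ring

@[simp] lemma coeff_cube_003 (w : Fin 3 → ℂ) :
    coeff (d 0 0 3) (cubePoly w) = w 2 ^ 3 := by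
  rw [cube_expand]; simp [coeff_monomial]

@[simp] lemma coeff_cube_012 (w : Fin 3 → ℂ) :
    coeff (d 0 1 2) (cubePoly w) = 3 * w 1 * w 2 ^ 2 := by
  rw [cube_expand]; simp [coeff_monomial]

@[simp] lemma coeff_cube_021 (w : Fin 3 → ℂ) :
    coeff (d 0 2 1) (cubePoly w) = 3 * w 1 ^ 2 * w 2 := by
  rw [cube_expand]; simp [coeff_monomial]

@[simp] lemma coeff_cube_030 (w : Fin 3 → ℂ) :
    coeff (d 0 3 0) (cubePoly w) = w 1 ^ 3 := by
  rw [cube_expand]; simp [coeff_monomial]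

@[simp] lemma coeff_cube_102 (w : Fin 3 → ℂ) :
    coeff (d 1 0 2) (cubePoly w) = 3 * w 0 * w 2 ^ 2 := by
  rw [cube_expand]; simp [coeff_monomial]

@[simp] lemma coeff_cube_111 (w : Fin 3 → ℂ) :
    coeff (d 1 1 1) (cubePoly w) = 6 * w 0 * w 1 * w 2 := by
  rw [cube_expand]; simp [coeff_monomial]

@[simp] lemma coeff_cube_120 (w : Fin 3 → ℂ) :
    coeff (d 1 2 0) (cubePoly w) = 3 * w 0 * w 1 ^ 2 := by
  rw [cube_expand]; simp [coeff_monomial]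

@[simp] lemma coeff_cube_201 (w : Fin 3 → ℂ) :
    coeff (d 2 0 1) (cubePoly w) = 3 * w 0 ^ 2 * w 2 := by
  rw [cube_expand]; simp [coeff_monomial]

@[simp] lemma coeff_cube_210 (w : Fin 3 → ℂ) :
    coeff (d 2 1 0) (cubePoly w) = 3 * w 0 ^ 2 * w 1 := by
  rw [cube_expand]; simp [coeff_monomial]

@[simp] lemma coeff_cube_300 (w : Fin 3 → ℂ) :
    coeff (d 3 0 0) (cubePoly w) = w 0 ^ 3 := by
  rw [cube_expand]; simp [coeff_monomial]

noncomputable def Lc (m : Fin 3 →₀ ℕ) : Sym3W →ₗ[ℂ] ℂ :=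
  (lcoeff ℂ m).comp Sym3W.subtype

@[simp] lemma Lc_apply (m : Fin 3 →₀ ℕ) (p : Sym3W) :
    Lc m p = coeff m (p : MvPolynomial (Fin 3) ℂ) := rfl

noncomputable def tri (m1 m2 m3 : Fin 3 →₀ ℕ) : MultilinearMap ℂ (fun _ : Fin 3 => Sym3W) ℂ :=
  (MultilinearMap.mkPiAlgebra ℂ (Fin 3) ℂ).compLinearMap ![Lc m1, Lc m2, Lc m3]

lemma tri_apply (m1 m2 m3 : Fin 3 →₀ ℕ) (v : Fin 3 → Sym3W) :
    tri m1 m2 m3 v =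
      coeff m1 ((v 0 : MvPolynomial (Fin 3) ℂ)) * coeff m2 ((v 1 : MvPolynomial (Fin 3) ℂ))
        * coeff m3 ((v 2 : MvPolynomial (Fin 3) ℂ)) := by
  simp [tri, MultilinearMap.mkPiAlgebra_apply, Fin.prod_univ_three, mul_assoc]

noncomputable def alt6 (m1 m2 m3 : Fin 3 →₀ ℕ) : MultilinearMap ℂ (fun _ : Fin 3 => Sym3W) ℂ :=
  tri m1 m2 m3 - tri m1 m3 m2 - tri m2 m1 m3 + tri m2 m3 m1 + tri m3 m1 m2 - tri m3 m2 m1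

noncomputable def base : MultilinearMap ℂ (fun _ : Fin 3 => Sym3W) ℂ :=
  (-1 : ℂ) • alt6 (d 0 0 3) (d 0 3 0) (d 3 0 0)
  + (1 / 3 : ℂ) • alt6 (d 0 0 3) (d 1 2 0) (d 2 1 0)
  + (1 / 3 : ℂ) • alt6 (d 0 1 2) (d 0 2 1) (d 3 0 0)
  + (-1 / 9 : ℂ) • alt6 (d 0 1 2) (d 1 1 1) (d 2 1 0)
  + (-1 / 9 : ℂ) • alt6 (d 0 1 2) (d 1 2 0) (d 2 0 1)
  + (1 / 9 : ℂ) • alt6 (d 0 2 1) (d 1 0 2) (d 2 1 0)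
  + (1 / 9 : ℂ) • alt6 (d 0 2 1) (d 1 1 1) (d 2 0 1)
  + (-1 / 3 : ℂ) • alt6 (d 0 3 0) (d 1 0 2) (d 2 0 1)
  + (1 / 9 : ℂ) • alt6 (d 1 0 2) (d 1 1 1) (d 1 2 0)

set_option maxHeartbeats 1000000 in
lemma base_eq01 (v : Fin 3 → Sym3W) (hv : v 0 = v 1) : base v = 0 := by
  simp only [base, alt6, MultilinearMap.add_apply, MultilinearMap.sub_apply,
    MultilinearMap.smul_apply, tri_apply, smul_eq_mul]
  rw [hv]; ring

set_option maxHeartbeats 1000000 in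
lemma base_eq02 (v : Fin 3 → Sym3W) (hv : v 0 = v 2) : base v = 0 := by
  simp only [base, alt6, MultilinearMap.add_apply, MultilinearMap.sub_apply,
    MultilinearMap.smul_apply, tri_apply, smul_eq_mul]
  rw [hv]; ring

set_option maxHeartbeats 1000000 in
lemma base_eq12 (v : Fin 3 → Sym3W) (hv : v 1 = v 2) : base v = 0 := by
  simp only [base, alt6, MultilinearMap.add_apply, MultilinearMap.sub_apply,
    MultilinearMap.smul_apply, tri_apply, smul_eq_mul]
  rw [hv]; ring

lemma base_eq_zero (v : Fin 3 → Sym3W) (i j : Fin 3) (hv : v i = v j) (hij : i ≠ j) :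
    base v = 0 := by
  fin_cases i <;> fin_cases j <;> simp_all only [ne_eq, Fin.isValue] <;>
    first
      | exact absurd rfl hij
      | exact base_eq01 v hv
      | exact base_eq01 v hv.symm
      | exact base_eq02 v hv
      | exact base_eq02 v hv.symm
      | exact base_eq12 v hv
      | exact base_eq12 v hv.symm

noncomputable def sigma0 (c : ℂ) : Sym3W [⋀^Fin 3]→ₗ[ℂ] ℂ where
  toMultilinearMap := (c ^ 3) • base
  map_eq_zero_of_eq' := fun v i j hv hij => by
    simp [base_eq_zero v i j hv hij]

lemma sigma0_apply (c : ℂ) (v : Fin 3 → Sym3W) : sigma0 c v = c ^ 3 * base v := rfl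

set_option maxHeartbeats 1000000 in
lemma sigma0_cube (c : ℂ) (x y z : Fin 3 → ℂ) :
    sigma0 c ![cube x, cube y, cube z] = (c * Matrix.det (Matrix.of ![x, y, z])) ^ 3 := by
  rw [sigma0_apply]
  simp only [base, alt6, MultilinearMap.add_apply, MultilinearMap.sub_apply,
    MultilinearMap.smul_apply, tri_apply, smul_eq_mul, Matrix.cons_val_zero, Matrix.cons_val_one,
    Matrix.head_cons, Matrix.cons_val_two, Matrix.tail_cons]
  simp only [cube, coeff_cube_003, coeff_cube_012, coeff_cube_021, coeff_cube_030,
    coeff_cube_102, coeff_cube_111, coeff_cube_120, coeff_cube_201, coeff_cube_210,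
    coeff_cube_300]
  rw [Matrix.det_fin_three]
  simp only [Matrix.of_apply, Matrix.cons_val_zero, Matrix.cons_val_one, Matrix.head_cons,
    Matrix.cons_val_two, Matrix.tail_cons, Matrix.head_fin_const]
  ring
lemma cp_mem (w : Fin 3 → ℂ) :
    cubePoly w ∈ Submodule.span ℂ (Set.range cubePoly) :=
  Submodule.subset_span ⟨w, rfl⟩

lemma mem_003 :
    (monomial (d 0 0 3) (1:ℂ)) ∈ Submodule.span ℂ (Set.range cubePoly) := by
  have e1 : (monomial (d 0 0 3) (1:ℂ)) = cubePoly ![0,0,1] := by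
    rw [monomial_d]; simp only [cubePoly, Fin.sum_univ_three, Matrix.cons_val_zero,
      Matrix.cons_val_one, Matrix.head_cons, Matrix.cons_val_two, Matrix.tail_cons,
      map_one, map_zero, map_neg, map_ofNat]
    ring
  rw [e1]; exact cp_mem _

lemma mem_012 :
    (monomial (d 0 1 2) (1:ℂ)) ∈ Submodule.span ℂ (Set.range cubePoly) := by
  rw [← Submodule.smul_mem_iff _ (show (6:ℂ) ≠ 0 by norm_num)]
  have e1 : (6:ℂ) • (monomial (d 0 1 2) (1:ℂ)) =
      cubePoly ![0,1,1] - cubePoly ![0,-1,1] - (2:ℂ) • cubePoly ![0,1,0] := by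
    rw [monomial_d]; simp only [cubePoly, Fin.sum_univ_three, smul_eq_C_mul,
      Matrix.cons_val_zero, Matrix.cons_val_one, Matrix.head_cons, Matrix.cons_val_two,
      Matrix.tail_cons, map_one, map_zero, map_neg, map_ofNat]
    ring
  rw [e1]
  exact sub_mem (sub_mem (cp_mem _) (cp_mem _)) (Submodule.smul_mem _ _ (cp_mem _))

lemma mem_021 :
    (monomial (d 0 2 1) (1:ℂ)) ∈ Submodule.span ℂ (Set.range cubePoly) := by
  rw [← Submodule.smul_mem_iff _ (show (6:ℂ) ≠ 0 by norm_num)]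
  have e1 : (6:ℂ) • (monomial (d 0 2 1) (1:ℂ)) =
      cubePoly ![0,1,1] - cubePoly ![0,1,-1] - (2:ℂ) • cubePoly ![0,0,1] := by
    rw [monomial_d]; simp only [cubePoly, Fin.sum_univ_three, smul_eq_C_mul,
      Matrix.cons_val_zero, Matrix.cons_val_one, Matrix.head_cons, Matrix.cons_val_two,
      Matrix.tail_cons, map_one, map_zero, map_neg, map_ofNat]
    ring
  rw [e1]
  exact sub_mem (sub_mem (cp_mem _) (cp_mem _)) (Submodule.smul_mem _ _ (cp_mem _))

lemma mem_030 :
    (monomial (d 0 3 0) (1:ℂ)) ∈ Submodule.span ℂ (Set.range cubePoly) := by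
  have e1 : (monomial (d 0 3 0) (1:ℂ)) = cubePoly ![0,1,0] := by
    rw [monomial_d]; simp only [cubePoly, Fin.sum_univ_three, Matrix.cons_val_zero,
      Matrix.cons_val_one, Matrix.head_cons, Matrix.cons_val_two, Matrix.tail_cons,
      map_one, map_zero, map_neg, map_ofNat]
    ring
  rw [e1]; exact cp_mem _

lemma mem_102 :
    (monomial (d 1 0 2) (1:ℂ)) ∈ Submodule.span ℂ (Set.range cubePoly) := by
  rw [← Submodule.smul_mem_iff _ (show (6:ℂ) ≠ 0 by norm_num)]
  have e1 : (6:ℂ) • (monomial (d 1 0 2) (1:ℂ)) =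
      cubePoly ![1,0,1] - cubePoly ![-1,0,1] - (2:ℂ) • cubePoly ![1,0,0] := by
    rw [monomial_d]; simp only [cubePoly, Fin.sum_univ_three, smul_eq_C_mul,
      Matrix.cons_val_zero, Matrix.cons_val_one, Matrix.head_cons, Matrix.cons_val_two,
      Matrix.tail_cons, map_one, map_zero, map_neg, map_ofNat]
    ring
  rw [e1]
  exact sub_mem (sub_mem (cp_mem _) (cp_mem _)) (Submodule.smul_mem _ _ (cp_mem _))

lemma mem_111 :
    (monomial (d 1 1 1) (1:ℂ)) ∈ Submodule.span ℂ (Set.range cubePoly) := by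
  rw [← Submodule.smul_mem_iff _ (show (6:ℂ) ≠ 0 by norm_num)]
  have e1 : (6:ℂ) • (monomial (d 1 1 1) (1:ℂ)) =
      cubePoly ![1,1,1] - cubePoly ![1,1,0] - cubePoly ![1,0,1] - cubePoly ![0,1,1]
        + cubePoly ![1,0,0] + cubePoly ![0,1,0] + cubePoly ![0,0,1] := by
    rw [monomial_d]; simp only [cubePoly, Fin.sum_univ_three, smul_eq_C_mul,
      Matrix.cons_val_zero, Matrix.cons_val_one, Matrix.head_cons, Matrix.cons_val_two,
      Matrix.tail_cons, map_one, map_zero, map_neg, map_ofNat]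
    ring
  rw [e1]
  exact add_mem (add_mem (add_mem (sub_mem (sub_mem (sub_mem (cp_mem _) (cp_mem _))
    (cp_mem _)) (cp_mem _)) (cp_mem _)) (cp_mem _)) (cp_mem _)

lemma mem_120 :
    (monomial (d 1 2 0) (1:ℂ)) ∈ Submodule.span ℂ (Set.range cubePoly) := by
  rw [← Submodule.smul_mem_iff _ (show (6:ℂ) ≠ 0 by norm_num)]
  have e1 : (6:ℂ) • (monomial (d 1 2 0) (1:ℂ)) =
      cubePoly ![1,1,0] - cubePoly ![-1,1,0] - (2:ℂ) • cubePoly ![1,0,0] := by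
    rw [monomial_d]; simp only [cubePoly, Fin.sum_univ_three, smul_eq_C_mul,
      Matrix.cons_val_zero, Matrix.cons_val_one, Matrix.head_cons, Matrix.cons_val_two,
      Matrix.tail_cons, map_one, map_zero, map_neg, map_ofNat]
    ring
  rw [e1]
  exact sub_mem (sub_mem (cp_mem _) (cp_mem _)) (Submodule.smul_mem _ _ (cp_mem _))

lemma mem_201 :
    (monomial (d 2 0 1) (1:ℂ)) ∈ Submodule.span ℂ (Set.range cubePoly) := by
  rw [← Submodule.smul_mem_iff _ (show (6:ℂ) ≠ 0 by norm_num)]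
  have e1 : (6:ℂ) • (monomial (d 2 0 1) (1:ℂ)) =
      cubePoly ![1,0,1] - cubePoly ![1,0,-1] - (2:ℂ) • cubePoly ![0,0,1] := by
    rw [monomial_d]; simp only [cubePoly, Fin.sum_univ_three, smul_eq_C_mul,
      Matrix.cons_val_zero, Matrix.cons_val_one, Matrix.head_cons, Matrix.cons_val_two,
      Matrix.tail_cons, map_one, map_zero, map_neg, map_ofNat]
    ring
  rw [e1]
  exact sub_mem (sub_mem (cp_mem _) (cp_mem _)) (Submodule.smul_mem _ _ (cp_mem _))

lemma mem_210 :
    (monomial (d 2 1 0) (1:ℂ)) ∈ Submodule.span ℂ (Set.range cubePoly) := by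
  rw [← Submodule.smul_mem_iff _ (show (6:ℂ) ≠ 0 by norm_num)]
  have e1 : (6:ℂ) • (monomial (d 2 1 0) (1:ℂ)) =
      cubePoly ![1,1,0] - cubePoly ![1,-1,0] - (2:ℂ) • cubePoly ![0,1,0] := by
    rw [monomial_d]; simp only [cubePoly, Fin.sum_univ_three, smul_eq_C_mul,
      Matrix.cons_val_zero, Matrix.cons_val_one, Matrix.head_cons, Matrix.cons_val_two,
      Matrix.tail_cons, map_one, map_zero, map_neg, map_ofNat]
    ring
  rw [e1]
  exact sub_mem (sub_mem (cp_mem _) (cp_mem _)) (Submodule.smul_mem _ _ (cp_mem _))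

lemma mem_300 :
    (monomial (d 3 0 0) (1:ℂ)) ∈ Submodule.span ℂ (Set.range cubePoly) := by
  have e1 : (monomial (d 3 0 0) (1:ℂ)) = cubePoly ![1,0,0] := by
    rw [monomial_d]; simp only [cubePoly, Fin.sum_univ_three, Matrix.cons_val_zero,
      Matrix.cons_val_one, Matrix.head_cons, Matrix.cons_val_two, Matrix.tail_cons,
      map_one, map_zero, map_neg, map_ofNat]
    ring
  rw [e1]; exact cp_mem _

set_option maxHeartbeats 2000000 in
lemma monomial_mem (a b c : ℕ) (h : a + b + c = 3) :
    (monomial (d a b c) (1:ℂ)) ∈ Submodule.span ℂ (Set.range cubePoly) := by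
  have ha : a ≤ 3 := by omega
  have hb : b ≤ 3 := by omega
  have hc : c ≤ 3 := by omega
  interval_cases a <;> interval_cases b <;> interval_cases c <;>
    first
      | omega
      | exact mem_003
      | exact mem_012
      | exact mem_021
      | exact mem_030
      | exact mem_102
      | exact mem_111
      | exact mem_120
      | exact mem_201
      | exact mem_210
      | exact mem_300

lemma mem_span_cubePoly {p : MvPolynomial (Fin 3) ℂ} (hp : p.IsHomogeneous 3) :
    p ∈ Submodule.span ℂ (Set.range cubePoly) := by
  rw [p.as_sum]
  refine Submodule.sum_mem _ fun v hv => ?_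
  have h3 : v 0 + v 1 + v 2 = 3 := by
    have h := hp (mem_support_iff.mp hv)
    simpa [Finsupp.weight_apply, Finsupp.sum_fintype, Fin.sum_univ_three] using h
  have e1 : (monomial v (coeff v p) : MvPolynomial (Fin 3) ℂ) = coeff v p • monomial v 1 := by
    simp [smul_monomial]
  rw [e1]
  refine Submodule.smul_mem _ _ ?_
  have h4 := monomial_mem (v 0) (v 1) (v 2) h3
  rwa [← d_eval v] at h4

lemma span_cube : Submodule.span ℂ (Set.range cube) = ⊤ := by
  rw [eq_top_iff]
  rintro ⟨p, hp⟩ -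
  have h1 : p ∈ Submodule.span ℂ (Set.range cubePoly) := mem_span_cubePoly hp
  have h2 : Submodule.span ℂ (Set.range cubePoly) =
      Submodule.map Sym3W.subtype (Submodule.span ℂ (Set.range cube)) := by
    rw [Submodule.map_span]
    congr 1
    rw [← Set.range_comp]
    rfl
  rw [h2] at h1
  obtain ⟨q, hq, hqe⟩ := h1
  have hq2 : q = ⟨p, hp⟩ := Subtype.ext hqe
  rwa [← hq2]

lemma upd0 {α : Type*} (p q r a : α) : Function.update ![p,q,r] (0:Fin 3) a = ![a,q,r] := by
  ext j; fin_cases j <;> simp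
lemma upd1 {α : Type*} (p q r a : α) : Function.update ![p,q,r] (1:Fin 3) a = ![p,a,r] := by
  ext j; fin_cases j <;> simp [Function.update]
lemma upd2 {α : Type*} (p q r a : α) : Function.update ![p,q,r] (2:Fin 3) a = ![p,q,a] := by
  ext j; fin_cases j <;> simp [Function.update]

lemma alt_ext {σ τ : Sym3W [⋀^Fin 3]→ₗ[ℂ] ℂ}
    (h : ∀ x y z : Fin 3 → ℂ, σ ![cube x, cube y, cube z] = τ ![cube x, cube y, cube z]) :
    σ = τ := by
  have hs : ∀ p : Sym3W, p ∈ Submodule.span ℂ (Set.range cube) := fun p => by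
    rw [span_cube]; trivial
  have key : ∀ p q r : Sym3W, σ ![p, q, r] = τ ![p, q, r] := by
    intro p q r
    induction hs p using Submodule.span_induction with
    | mem p' hp =>
      obtain ⟨x, rfl⟩ := hp
      induction hs q using Submodule.span_induction with
      | mem q' hq =>
        obtain ⟨y, rfl⟩ := hq
        induction hs r using Submodule.span_induction with
        | mem r' hr =>
          obtain ⟨z, rfl⟩ := hr
          exact h x y z
        | zero =>
          rw [σ.map_coord_zero (m := ![cube x, cube y, 0]) 2 (by simp),
            τ.map_coord_zero (m := ![cube x, cube y, 0]) 2 (by simp)]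
        | add r1 r2 _ _ ih1 ih2 =>
          have e1 := σ.map_update_add ![cube x, cube y, 0] 2 r1 r2
          have e2 := τ.map_update_add ![cube x, cube y, 0] 2 r1 r2
          rw [upd2, upd2, upd2] at e1 e2
          rw [e1, e2, ih1, ih2]
        | smul a r1 _ ih =>
          have e1 := σ.map_update_smul ![cube x, cube y, 0] 2 a r1
          have e2 := τ.map_update_smul ![cube x, cube y, 0] 2 a r1
          rw [upd2, upd2] at e1 e2
          rw [e1, e2, ih]
      | zero =>
        rw [σ.map_coord_zero (m := ![cube x, 0, r]) 1 (by simp),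
          τ.map_coord_zero (m := ![cube x, 0, r]) 1 (by simp)]
      | add q1 q2 _ _ ih1 ih2 =>
        have e1 := σ.map_update_add ![cube x, 0, r] 1 q1 q2
        have e2 := τ.map_update_add ![cube x, 0, r] 1 q1 q2
        rw [upd1, upd1, upd1] at e1 e2
        rw [e1, e2, ih1, ih2]
      | smul a q1 _ ih =>
        have e1 := σ.map_update_smul ![cube x, 0, r] 1 a q1
        have e2 := τ.map_update_smul ![cube x, 0, r] 1 a q1
        rw [upd1, upd1] at e1 e2
        rw [e1, e2, ih]
    | zero =>
      rw [σ.map_coord_zero (m := ![0, q, r]) 0 (by simp),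
        τ.map_coord_zero (m := ![0, q, r]) 0 (by simp)]
    | add p1 p2 _ _ ih1 ih2 =>
      have e1 := σ.map_update_add ![0, q, r] 0 p1 p2
      have e2 := τ.map_update_add ![0, q, r] 0 p1 p2
      rw [upd0, upd0, upd0] at e1 e2
      rw [e1, e2, ih1, ih2]
    | smul a p1 _ ih =>
      have e1 := σ.map_update_smul ![0, q, r] 0 a p1
      have e2 := τ.map_update_smul ![0, q, r] 0 a p1
      rw [upd0, upd0] at e1 e2
      rw [e1, e2, ih]
  ext v
  have hv : v = ![v 0, v 1, v 2] := by
    funext j; fin_cases j <;> rfl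
  rw [hv]
  exact key _ _ _

end Aux

/-- Fix a generator `η` of `Λ³W`, giving `det(x,y,z)` by `x∧y∧z = det(x,y,z)·η`; the
generator corresponds to a nonzero scalar `c`, with `det_η = c · det`. There exists a unique
alternating trilinear form `σ₀` on `Sym³W` such that `σ₀(x³, y³, z³) = det(x,y,z)³`
for all `x, y, z ∈ W`. -/
theorem exists_unique_invariant_trivector (c : ℂ) (hc : c ≠ 0) :
    ∃! σ : Sym3W [⋀^Fin 3]→ₗ[ℂ] ℂ,
      ∀ x y z : Fin 3 → ℂ,
        σ ![cube x, cube y, cube z] = (c * Matrix.det (Matrix.of ![x, y, z])) ^ 3 := by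
  refine ⟨Aux.sigma0 c, fun x y z => Aux.sigma0_cube c x y z, fun σ hσ => ?_⟩
  exact Aux.alt_ext fun x y z => (hσ x y z).trans (Aux.sigma0_cube c x y z).symm
end

section
/- Let V₇ and W₃ be complex vector spaces of dimensions 7 and 3, let α ∈ Λ³V₇* be a 3-form with no 5-dimensional totally isotropic subspace (i.e., α does not vanish identically on any 5-dimensional subspace of V₇), and let β be a nonzero element of Λ³W₃*. Set V₁₀ = V₇ ⊕ W₃ and σ₀ = α + β (extended by zero). Then every 6-dimensional subspace W₆ ⊆ V₁₀ on which σ₀ vanishes identically is of the form W₄ ⊕ W₂, where W₄ ⊆ V₇ is a 4-dimensional subspace totally isotropic for α and W₂ ⊆ W₃ is 2-dimensional. Conversely, every such W₄ ⊕ W₂ is totally isotropic for σ₀. -/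
open Module

/-- A subspace `U` is totally isotropic for an alternating 3-form `f` if `f` vanishes on
all triples of vectors of `U`. -/
def TotallyIsotropic {V : Type*} [AddCommGroup V] [Module ℂ V]
    (f : V [⋀^Fin 3]→ₗ[ℂ] ℂ) (U : Submodule ℂ V) : Prop :=
  ∀ v1 ∈ U, ∀ v2 ∈ U, ∀ v3 ∈ U, f ![v1, v2, v3] = 0

/-- An alternating 3-form vanishes on any triple of vectors lying in a subspace of
dimension at most 2. -/
lemma vanish3 {V : Type*} [AddCommGroup V] [Module ℂ V]
    (f : V [⋀^Fin 3]→ₗ[ℂ] ℂ) (P : Submodule ℂ V) [FiniteDimensional ℂ P]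
    (hP : finrank ℂ P ≤ 2) (v : Fin 3 → V) (hv : ∀ i, v i ∈ P) : f v = 0 := by
  apply f.map_linearDependent
  intro h
  have h' : LinearIndependent ℂ (fun i => (⟨v i, hv i⟩ : P)) := by
    apply LinearIndependent.of_comp P.subtype
    exact h
  have := h'.fintype_card_le_finrank
  simp [Fintype.card_fin] at this
  omega

/-- In a finite-dimensional space there is a subspace of any dimension up to the total. -/
lemma exists_finrank_submodule {V : Type*} [AddCommGroup V] [Module ℂ V]
    [FiniteDimensional ℂ V] (k : ℕ) (hk : k ≤ finrank ℂ V) :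
    ∃ S : Submodule ℂ V, finrank ℂ S = k := by
  classical
  let b := finBasis ℂ V
  have hli : LinearIndependent ℂ (b ∘ Fin.castLE hk) :=
    b.linearIndependent.comp _ (Fin.castLE_injective hk)
  refine ⟨Submodule.span ℂ (Set.range (b ∘ Fin.castLE hk)), ?_⟩
  rw [finrank_span_eq_card hli, Fintype.card_fin]

/-- Inside any submodule there is a submodule of any dimension up to its own. -/
lemma exists_finrank_le_submodule {V : Type*} [AddCommGroup V] [Module ℂ V]
    [FiniteDimensional ℂ V] (U : Submodule ℂ V) (k : ℕ) (hk : k ≤ finrank ℂ U) :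
    ∃ S : Submodule ℂ V, S ≤ U ∧ finrank ℂ S = k := by
  obtain ⟨S, hS⟩ := exists_finrank_submodule (V := U) k hk
  refine ⟨S.map U.subtype, ?_, ?_⟩
  · rintro x ⟨y, -, rfl⟩; exact y.2
  · rw [Submodule.finrank_map_subtype_eq]; exact hS

lemma finrank_submodule_prod {V W : Type*} [AddCommGroup V] [Module ℂ V]
    [AddCommGroup W] [Module ℂ W] [FiniteDimensional ℂ V] [FiniteDimensional ℂ W]
    (p : Submodule ℂ V) (q : Submodule ℂ W) :
    finrank ℂ (p.prod q) = finrank ℂ p + finrank ℂ q := by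
  have e : (p.prod q) ≃ₗ[ℂ] p × q :=
  { toFun := fun x => (⟨x.1.1, x.2.1⟩, ⟨x.1.2, x.2.2⟩)
    map_add' := fun x y => rfl
    map_smul' := fun c x => rfl
    invFun := fun y => ⟨(y.1.1, y.2.1), ⟨y.1.2, y.2.2⟩⟩
    left_inv := fun x => rfl
    right_inv := fun y => rfl }
  rw [e.finrank_eq, Module.finrank_prod]

/-- Let `V₇`, `W₃` have dimensions 7 and 3, let `α` be a 3-form on `V₇` with no
5-dimensional totally isotropic subspace, let `β ≠ 0` be a 3-form on `W₃`, and let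
`σ₀ = α + β` on `V₁₀ = V₇ ⊕ W₃`. Then every 6-dimensional subspace `W₆ ⊆ V₁₀` totally
isotropic for `σ₀` is of the form `W₄ ⊕ W₂` with `W₄ ⊆ V₇` a 4-dimensional subspace
totally isotropic for `α` and `W₂ ⊆ W₃` 2-dimensional; conversely every such `W₄ ⊕ W₂`
is totally isotropic for `σ₀`. -/
theorem isotropic_sixfold_splits
    (V7 W3 : Type*) [AddCommGroup V7] [Module ℂ V7] [AddCommGroup W3] [Module ℂ W3]
    [FiniteDimensional ℂ V7] [FiniteDimensional ℂ W3]
    (h7 : finrank ℂ V7 = 7) (h3 : finrank ℂ W3 = 3)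
    (α : V7 [⋀^Fin 3]→ₗ[ℂ] ℂ) (β : W3 [⋀^Fin 3]→ₗ[ℂ] ℂ) (hβ : β ≠ 0)
    (hα : ∀ U : Submodule ℂ V7, finrank ℂ U = 5 → ¬ TotallyIsotropic α U)
    (σ : (V7 × W3) [⋀^Fin 3]→ₗ[ℂ] ℂ)
    (hσ : σ = α.compLinearMap (LinearMap.fst ℂ V7 W3)
        + β.compLinearMap (LinearMap.snd ℂ V7 W3)) :
    (∀ W6 : Submodule ℂ (V7 × W3), finrank ℂ W6 = 6 → TotallyIsotropic σ W6 →
      ∃ W4 : Submodule ℂ V7, ∃ W2 : Submodule ℂ W3,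
        finrank ℂ W4 = 4 ∧ finrank ℂ W2 = 2 ∧ TotallyIsotropic α W4 ∧
          W6 = W4.prod W2)
    ∧ ∀ (W4 : Submodule ℂ V7) (W2 : Submodule ℂ W3),
        finrank ℂ W4 = 4 → finrank ℂ W2 = 2 → TotallyIsotropic α W4 →
          TotallyIsotropic σ (W4.prod W2) := by
  have hexp : ∀ a b c : V7 × W3,
      σ ![a, b, c] = α ![a.1, b.1, c.1] + β ![a.2, b.2, c.2] := by
    intro a b c
    subst hσ
    simp only [AlternatingMap.add_apply, AlternatingMap.compLinearMap_apply]
    congr 1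
    · congr 1; funext i; fin_cases i <;> rfl
    · congr 1; funext i; fin_cases i <;> rfl
  -- any α-isotropic subspace has dimension ≤ 4
  have key : ∀ U : Submodule ℂ V7, TotallyIsotropic α U → finrank ℂ U ≤ 4 := by
    intro U hU
    by_contra h
    push_neg at h
    obtain ⟨S, hSle, hS5⟩ := exists_finrank_le_submodule U 5 h
    exact hα S hS5 (fun v1 h1 v2 h2 v3 h3 => hU v1 (hSle h1) v2 (hSle h2) v3 (hSle h3))
  constructor
  · intro W6 hW6rk hW6iso
    set A := W6.map (LinearMap.fst ℂ V7 W3) with hA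
    set B := W6.map (LinearMap.snd ℂ V7 W3) with hB
    -- Step 1: dim B ≤ 2
    have hBle : finrank ℂ B ≤ 2 := by
      by_contra hBgt
      push_neg at hBgt
      have hBle3 : finrank ℂ B ≤ 3 := h3 ▸ B.finrank_le
      have hBtop : B = ⊤ := Submodule.eq_top_of_finrank_eq (by omega)
      have hlift : ∀ x : W3, ∃ u ∈ W6, u.2 = x := by
        intro x
        have : x ∈ B := hBtop ▸ Submodule.mem_top
        obtain ⟨u, hu, hux⟩ := this
        exact ⟨u, hu, hux⟩
      set K2 := W6.comap (LinearMap.inr ℂ V7 W3) with hK2def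
      have hK2mem : ∀ k ∈ K2, ((0 : V7), k) ∈ W6 := fun k hk => hk
      have hzero : ∀ (x : W3), ∀ k₁ ∈ K2, ∀ k₂ ∈ K2, β ![x, k₁, k₂] = 0 := by
        intro x k₁ hk₁ k₂ hk₂
        obtain ⟨u, hu, hux⟩ := hlift x
        have h0 := hW6iso u hu ((0 : V7), k₁) (hK2mem k₁ hk₁) ((0 : V7), k₂) (hK2mem k₂ hk₂)
        rw [hexp] at h0
        have hα0 : α ![u.1, 0, 0] = 0 :=
          α.map_eq_zero_of_eq _ (i := 1) (j := 2) rfl (by decide)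
        simpa [hα0, hux] using h0
      have hK2le : finrank ℂ K2 ≤ 1 := by
        by_contra hk
        push_neg at hk
        -- two independent vectors in K2
        let bb := finBasis ℂ K2
        let w : Fin 2 → W3 := fun i => ((bb (Fin.castLE hk i)) : W3)
        have hwK2 : ∀ i, w i ∈ K2 := fun i => (bb (Fin.castLE hk i)).2
        have hwli : LinearIndependent ℂ w := by
          have : LinearIndependent ℂ (bb ∘ Fin.castLE hk) :=
            bb.linearIndependent.comp _ (Fin.castLE_injective hk)
          exact this.map' K2.subtype (Submodule.ker_subtype K2)
        have hspan : Submodule.span ℂ (Set.range w) ≠ ⊤ := by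
          intro hcon
          have h1 : finrank ℂ (Submodule.span ℂ (Set.range w)) = 2 := by
            rw [finrank_span_eq_card hwli, Fintype.card_fin]
          rw [hcon, finrank_top, h3] at h1
          omega
        obtain ⟨w₃, hw₃⟩ : ∃ x : W3, x ∉ Submodule.span ℂ (Set.range w) := by
          by_contra hcon
          push_neg at hcon
          exact hspan (Submodule.eq_top_iff'.2 hcon)
        have hli3 : LinearIndependent ℂ (Fin.cons w₃ w : Fin 3 → W3) :=
          hwli.fin_cons hw₃
        let b3 : Basis (Fin 3) ℂ W3 :=
          basisOfLinearIndependentOfCardEqFinrank hli3 (by simp [h3])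
        have hb3 : ⇑b3 = Fin.cons w₃ w :=
          coe_basisOfLinearIndependentOfCardEqFinrank hli3 (by simp [h3])
        have hβ0 : β = 0 := by
          apply Basis.ext_alternating b3
          intro v hv
          have hbij : Function.Bijective v := Finite.injective_iff_bijective.mp hv
          let e : Equiv.Perm (Fin 3) := Equiv.ofBijective v hbij
          have hve : (fun i => b3 (v i)) = ⇑b3 ∘ e := rfl
          rw [hve, AlternatingMap.map_perm]
          have : β ⇑b3 = 0 := by
            rw [hb3]
            have : (Fin.cons w₃ w : Fin 3 → W3) = ![w₃, w 0, w 1] := by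
              funext i; fin_cases i <;> rfl
            rw [this]
            exact hzero w₃ (w 0) (hwK2 0) (w 1) (hwK2 1)
          simp [this]
        exact hβ hβ0
      -- choose a plane P with K2 ⊓ P = ⊥
      obtain ⟨C, hC⟩ := Submodule.exists_isCompl K2
      have hCrk : finrank ℂ K2 + finrank ℂ C = 3 := by
        rw [Submodule.finrank_add_eq_of_isCompl hC, h3]
      obtain ⟨P, hPC, hP2⟩ := exists_finrank_le_submodule C 2 (by omega)
      have hdisj : K2 ⊓ P = ⊥ := by
        apply le_bot_iff.mp
        calc K2 ⊓ P ≤ K2 ⊓ C := inf_le_inf_left K2 hPC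
        _ = ⊥ := hC.inf_eq_bot
      set T : Submodule ℂ (V7 × W3) := (⊤ : Submodule ℂ V7).prod P with hT
      have hTrk : finrank ℂ T = 9 := by
        rw [hT, finrank_submodule_prod, finrank_top, h7, hP2]
      set W5 := W6 ⊓ T with hW5def
      have hW5rk : 5 ≤ finrank ℂ W5 := by
        have h1 := Submodule.finrank_sup_add_finrank_inf_eq W6 T
        rw [← hW5def] at h1
        have h2 : finrank ℂ ↥(W6 ⊔ T) ≤ 10 := by
          have := (W6 ⊔ T).finrank_le
          rwa [Module.finrank_prod, h7, h3] at this
        omega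
      -- project to V7
      set f : W5 →ₗ[ℂ] V7 := (LinearMap.fst ℂ V7 W3).comp W5.subtype with hf
      have hker : LinearMap.ker f = ⊥ := by
        rw [LinearMap.ker_eq_bot']
        rintro ⟨⟨v, x⟩, hm⟩ hfm
        have hv0 : v = 0 := hfm
        have hmem : ((v, x) : V7 × W3) ∈ W6 ⊓ T := hm
        have hxP : x ∈ P := hmem.2.2
        have hxK2 : x ∈ K2 := by
          show ((0 : V7), x) ∈ W6
          rw [← hv0]; exact hmem.1
        have : x ∈ K2 ⊓ P := ⟨hxK2, hxP⟩
        rw [hdisj] at this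
        simp only [Submodule.mem_bot] at this
        ext <;> simp [hv0, this]
      have hrange : LinearMap.range f = W5.map (LinearMap.fst ℂ V7 W3) := by
        rw [hf, LinearMap.range_comp, Submodule.range_subtype]
      set U := W5.map (LinearMap.fst ℂ V7 W3) with hU
      have hUrk : 5 ≤ finrank ℂ U := by
        have := LinearMap.finrank_range_add_finrank_ker f
        rw [hker, finrank_bot, add_zero, hrange] at this
        omega
      have hUiso : TotallyIsotropic α U := by
        rintro v1 hv1 v2 hv2 v3 hv3
        obtain ⟨u1, hu1, rfl⟩ := hv1
        obtain ⟨u2, hu2, rfl⟩ := hv2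
        obtain ⟨u3, hu3, rfl⟩ := hv3
        have h0 := hW6iso u1 hu1.1 u2 hu2.1 u3 hu3.1
        rw [hexp] at h0
        have hβ0 : β ![u1.2, u2.2, u3.2] = 0 := by
          apply vanish3 β P (le_of_eq hP2)
          intro i
          fin_cases i
          exacts [hu1.2.2, hu2.2.2, hu3.2.2]
        rw [hβ0, add_zero] at h0
        exact h0
      have := key U hUiso
      omega
    -- Step 2: A is isotropic for α
    have hAiso : TotallyIsotropic α A := by
      rintro v1 hv1 v2 hv2 v3 hv3
      obtain ⟨u1, hu1, rfl⟩ := hv1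
      obtain ⟨u2, hu2, rfl⟩ := hv2
      obtain ⟨u3, hu3, rfl⟩ := hv3
      have h0 := hW6iso u1 hu1 u2 hu2 u3 hu3
      rw [hexp] at h0
      have hβ0 : β ![u1.2, u2.2, u3.2] = 0 := by
        apply vanish3 β B hBle
        intro i
        fin_cases i
        exacts [⟨u1, hu1, rfl⟩, ⟨u2, hu2, rfl⟩, ⟨u3, hu3, rfl⟩]
      rw [hβ0, add_zero] at h0
      exact h0
    have hAle : finrank ℂ A ≤ 4 := key A hAiso
    have hle : W6 ≤ A.prod B := by
      intro x hx
      exact ⟨⟨x, hx, rfl⟩, ⟨x, hx, rfl⟩⟩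
    have hprodrk : finrank ℂ (A.prod B) = finrank ℂ A + finrank ℂ B :=
      finrank_submodule_prod A B
    have h6le : finrank ℂ W6 ≤ finrank ℂ (A.prod B) := Submodule.finrank_mono hle
    have hW6eq : W6 = A.prod B :=
      Submodule.eq_of_le_of_finrank_le hle (by omega)
    exact ⟨A, B, by omega, by omega, hAiso, hW6eq⟩
  · intro W4 W2 h4 h2 hiso v1 hv1 v2 hv2 v3 hv3
    rw [hexp]
    have hα0 : α ![v1.1, v2.1, v3.1] = 0 := hiso v1.1 hv1.1 v2.1 hv2.1 v3.1 hv3.1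
    have hβ0 : β ![v1.2, v2.2, v3.2] = 0 := by
      apply vanish3 β W2 (le_of_eq h2)
      intro i
      fin_cases i
      exacts [hv1.2, hv2.2, hv3.2]
    rw [hα0, hβ0, add_zero]
end

section
/- Let V₅ be a 5-dimensional complex vector space with a nondegenerate symmetric bilinear form q, and identify Λ²V₅ with the space of q-skew endomorphisms of V₅ via (x∧z)(u) = q(x,u)z - q(z,u)x. Define the trivector σ₀(a,b,c) = Tr(a∘b∘c) on V₁₀ = Λ²V₅. If x ∈ V₅ satisfies q(x,x) = 0, then σ₀ vanishes on Λ²(x ∧ x^{⊥q}) ∧ V₁₀; more precisely, for all z, z' ∈ x^{⊥q}, the endomorphisms a_z and a_{z'} associated with x∧z and x∧z' commute and their composition is q-symmetric, so that Tr(a_z ∘ a_{z'} ∘ c) = 0 for every q-skew endomorphism c. -/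
open Module

lemma trace_smulRight' (V : Type*) [AddCommGroup V] [Module ℂ V] [FiniteDimensional ℂ V]
    (f : V →ₗ[ℂ] ℂ) (m : V) :
    LinearMap.trace ℂ V (f.smulRight m) = f m := by
  have h : f.smulRight m = dualTensorHom ℂ V V (f ⊗ₜ m) := by
    ext u; simp
  rw [h, LinearMap.trace_eq_contract_apply, contractLeft_apply]

/-- Let `V₅` be 5-dimensional with a nondegenerate symmetric bilinear form `q`, and for
`x, z ∈ V₅` let `a_z` be the `q`-skew endomorphism associated with `x ∧ z`, namely
`a_z(u) = q(x,u)z - q(z,u)x`. If `q(x,x) = 0` and `z, z' ∈ x^⊥`, then `a_z` and `a_{z'}`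
commute, their composition is `q`-symmetric, and `Tr(a_z ∘ a_{z'} ∘ c) = 0` for every
`q`-skew endomorphism `c` (so the trivector `σ₀(a,b,c) = Tr(a∘b∘c)` on `Λ²V₅` vanishes
on `Λ²(x ∧ x^⊥) ∧ Λ²V₅`). -/
theorem trace_trivector_vanishes
    (V : Type*) [AddCommGroup V] [Module ℂ V] [FiniteDimensional ℂ V]
    (h5 : finrank ℂ V = 5)
    (q : LinearMap.BilinForm ℂ V) (hsymm : ∀ u v, q u v = q v u)
    (hnd : q.Nondegenerate)
    (x z z' : V) (hx : q x x = 0) (hz : q x z = 0) (hz' : q x z' = 0)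
    (a : V → (V →ₗ[ℂ] V))
    (ha : ∀ y, a y = (q x).smulRight y - (q y).smulRight x) :
    (a z ∘ₗ a z' = a z' ∘ₗ a z)
    ∧ (∀ u v, q ((a z ∘ₗ a z') u) v = q u ((a z ∘ₗ a z') v))
    ∧ ∀ c : V →ₗ[ℂ] V, (∀ u v, q (c u) v = - q u (c v)) →
        LinearMap.trace ℂ V (a z ∘ₗ a z' ∘ₗ c) = 0 := by
  have hz'' : q z x = 0 := by rw [hsymm]; exact hz
  have hz''' : q z' x = 0 := by rw [hsymm]; exact hz'
  have key : ∀ u, (a z ∘ₗ a z') u = (-(q z z' * q x u)) • x := by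
    intro u
    simp only [LinearMap.comp_apply, ha, LinearMap.sub_apply, LinearMap.smulRight_apply,
      map_sub, map_smul, hx, hz, hz', hz'', hz''', smul_smul, smul_sub]
    simp only [smul_eq_mul, mul_zero, zero_smul, sub_zero, zero_sub, neg_smul, zero_smul,
      sub_zero, neg_sub, zero_sub, neg_neg, mul_comm]
    module
  refine ⟨?_, ?_, ?_⟩
  · ext u
    rw [key u]
    simp only [LinearMap.comp_apply, ha, LinearMap.sub_apply, LinearMap.smulRight_apply,
      map_sub, map_smul, hx, hz, hz', hz'', hz''', smul_smul]
    simp only [smul_eq_mul, mul_zero, zero_smul, sub_zero, zero_sub, neg_smul, neg_sub]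
    rw [hsymm z z']
    module
  · intro u v
    rw [key u, key v]
    simp only [map_smul, LinearMap.smul_apply, smul_eq_mul]
    rw [hsymm x v, hsymm x u]
    ring_nf
  · intro c hc
    have hcx : q x (c x) = 0 := by
      have h1 := hc x x
      have h2 := hsymm (c x) x
      rw [h2] at h1
      have h3 : q x (c x) = - q x (c x) := h1
      have h4 : (2:ℂ) * q x (c x) = 0 := by linear_combination h3
      simpa using h4
    have heq : a z ∘ₗ a z' ∘ₗ c = ((-(q z z')) • ((q x).comp c)).smulRight x := by
      ext u
      rw [← LinearMap.comp_assoc, LinearMap.comp_apply, key (c u)]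
      simp [smul_smul, mul_comm]
    rw [heq, trace_smulRight']
    simp [hcx]
end
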